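/- Let X ∈ ℝ^{m×n} have SVD X = U Diag(σ) Vᵀ with U ∈ ℝ^{m×r}, V ∈ ℝ^{n×r}, σ ∈ ℝ₊^r (rank r, nonzero singular values). Then for every W ∈ ℝ^{m×n} with Uᵀ W = 0, W V = 0 and ‖W‖₂ ≤ 1, the matrix U Vᵀ + W is a subgradient of the nuclear norm at X; i.e., for all Z ∈ ℝ^{m×n}, ‖Z‖_* ≥ ‖X‖_* + ⟨U Vᵀ + W, Z − X⟩. -/

import Mathlib

open scoped BigOperators
open Matrix

noncomputable section

/-- Frobenius (trace) inner product of real matrices. -/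
def frobInner {m n : ℕ} (X Y : Matrix (Fin m) (Fin n) ℝ) : ℝ :=
  ∑ i, ∑ j, X i j * Y i j

/-- Frobenius norm of a real matrix. -/
def frobNorm {m n : ℕ} (X : Matrix (Fin m) (Fin n) ℝ) : ℝ :=
  Real.sqrt (frobInner X X)

/-- Euclidean norm of a vector in ℝ^p. -/
def vecNorm {p : ℕ} (b : Fin p → ℝ) : ℝ :=
  Real.sqrt (∑ i, b i ^ 2)

/-- Nuclear norm: the sum of the singular values of X (square roots of the
eigenvalues of X Xᵀ). -/
def nuclearNorm {m n : ℕ} (X : Matrix (Fin m) (Fin n) ℝ) : ℝ :=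
  ∑ i, Real.sqrt ((Matrix.isHermitian_mul_conjTranspose_self X).eigenvalues i)

/-- Cauchy-Schwarz for finite sums, sqrt form. -/
lemma dot_le_sqrt {k : ℕ} (f g : Fin k → ℝ) :
    ∑ i, f i * g i ≤ Real.sqrt (∑ i, f i ^ 2) * Real.sqrt (∑ i, g i ^ 2) := by
  calc ∑ i, f i * g i ≤ |∑ i, f i * g i| := le_abs_self _
    _ = Real.sqrt ((∑ i, f i * g i) ^ 2) := (Real.sqrt_sq_eq_abs _).symm
    _ ≤ Real.sqrt ((∑ i, f i ^ 2) * ∑ i, g i ^ 2) :=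
        Real.sqrt_le_sqrt (Finset.sum_mul_sq_le_sq_mul_sq Finset.univ f g)
    _ = _ := Real.sqrt_mul (Finset.sum_nonneg fun _ _ => sq_nonneg _) _

lemma dot_mulVec' {m n : ℕ} (M : Matrix (Fin m) (Fin n) ℝ) (u : Fin m → ℝ) (w : Fin n → ℝ) :
    u ⬝ᵥ (M *ᵥ w) = (Mᵀ *ᵥ u) ⬝ᵥ w := by
  rw [dotProduct_mulVec, mulVec_transpose]

/-- ∑ (Mᵀ u)² = u ⬝ (M Mᵀ u). -/
lemma sumsq_transpose {m n : ℕ} (M : Matrix (Fin m) (Fin n) ℝ) (u : Fin m → ℝ) :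
    ∑ j, ((Mᵀ *ᵥ u) j) ^ 2 = u ⬝ᵥ ((M * Mᵀ) *ᵥ u) := by
  rw [← mulVec_mulVec, dot_mulVec']
  simp [dotProduct, sq]

/-- ∑ (M v)² = v ⬝ (Mᵀ M v). -/
lemma sumsq_mulVec {m n : ℕ} (M : Matrix (Fin m) (Fin n) ℝ) (v : Fin n → ℝ) :
    ∑ i, ((M *ᵥ v) i) ^ 2 = v ⬝ᵥ ((Mᵀ * M) *ᵥ v) := by
  have := sumsq_transpose Mᵀ v
  rwa [transpose_transpose] at this

/-- operator norm bound transfers to the transpose. -/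
lemma transpose_bound {m n : ℕ} (M : Matrix (Fin m) (Fin n) ℝ)
    (h : ∀ v : Fin n → ℝ, ∑ i, (M.mulVec v i) ^ 2 ≤ ∑ j, v j ^ 2) :
    ∀ u : Fin m → ℝ, ∑ j, (Mᵀ.mulVec u j) ^ 2 ≤ ∑ i, u i ^ 2 := by
  intro u
  set y : Fin n → ℝ := Mᵀ *ᵥ u with hy
  set s : ℝ := ∑ j, (y j) ^ 2 with hs
  have hs0 : 0 ≤ s := Finset.sum_nonneg fun _ _ => sq_nonneg _
  have hu0 : 0 ≤ ∑ i, u i ^ 2 := Finset.sum_nonneg fun _ _ => sq_nonneg _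
  rcases eq_or_lt_of_le hs0 with h0 | h0
  · rw [← h0]; exact hu0
  have key : s = ∑ i, u i * ((M *ᵥ y) i) := by
    have : s = (Mᵀ *ᵥ u) ⬝ᵥ y := by simp [hs, dotProduct, sq, hy]
    rw [this, ← dot_mulVec']
    rfl
  have h1 : s ≤ Real.sqrt (∑ i, u i ^ 2) * Real.sqrt (∑ i, ((M *ᵥ y) i) ^ 2) := by
    rw [key]; exact dot_le_sqrt _ _
  have h2 : Real.sqrt (∑ i, ((M *ᵥ y) i) ^ 2) ≤ Real.sqrt s :=
    Real.sqrt_le_sqrt (h y)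
  have h3 : s ≤ Real.sqrt (∑ i, u i ^ 2) * Real.sqrt s := by
    calc s ≤ _ := h1
      _ ≤ _ := by
        apply mul_le_mul_of_nonneg_left h2 (Real.sqrt_nonneg _)
  have hss : Real.sqrt s * Real.sqrt s = s := Real.mul_self_sqrt hs0
  have hsp : 0 < Real.sqrt s := Real.sqrt_pos.mpr h0
  have h4 : Real.sqrt s ≤ Real.sqrt (∑ i, u i ^ 2) := by
    have := h3
    nth_rewrite 1 [← hss] at this
    exact le_of_mul_le_mul_right this hsp
  calc s = Real.sqrt s * Real.sqrt s := hss.symm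
    _ ≤ Real.sqrt (∑ i, u i ^ 2) * Real.sqrt (∑ i, u i ^ 2) :=
        mul_le_mul h4 h4 (Real.sqrt_nonneg _) (Real.sqrt_nonneg _)
    _ = ∑ i, u i ^ 2 := Real.mul_self_sqrt hu0

lemma frobInner_eq_trace {m n : ℕ} (A Z : Matrix (Fin m) (Fin n) ℝ) :
    frobInner A Z = Matrix.trace (A * Zᵀ) := by
  simp [frobInner, Matrix.trace, Matrix.diag, Matrix.mul_apply]

lemma eigen_facts {m n : ℕ} (Z : Matrix (Fin m) (Fin n) ℝ) :
    ∃ P : Matrix (Fin m) (Fin m) ℝ,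
      Pᵀ * P = 1 ∧ P * Pᵀ = 1 ∧
      Pᵀ * (Z * Zᵀ) * P =
        Matrix.diagonal ((Matrix.isHermitian_mul_conjTranspose_self Z).eigenvalues) := by
  have hH := Matrix.isHermitian_mul_conjTranspose_self Z
  set P : Matrix (Fin m) (Fin m) ℝ := (hH.eigenvectorUnitary : Matrix (Fin m) (Fin m) ℝ) with hP
  have hstar : star P = Pᵀ := by
    rw [Matrix.star_eq_conjTranspose, Matrix.conjTranspose_eq_transpose_of_trivial]
  have h1 : Pᵀ * P = 1 := by
    rw [← hstar]; exact Matrix.mem_unitaryGroup_iff'.mp hH.eigenvectorUnitary.2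
  have h2 : P * Pᵀ = 1 := by
    rw [← hstar]; exact Matrix.mem_unitaryGroup_iff.mp hH.eigenvectorUnitary.2
  refine ⟨P, h1, h2, ?_⟩
  have h3 : star (hH.eigenvectorUnitary : Matrix (Fin m) (Fin m) ℝ) * (Z * Zᴴ) *
      (hH.eigenvectorUnitary : Matrix (Fin m) (Fin m) ℝ) =
      Matrix.diagonal (RCLike.ofReal ∘ hH.eigenvalues) := by
    have := hH.conjStarAlgAut_star_eigenvectorUnitary
    rwa [Unitary.conjStarAlgAut_star_apply] at this
  rw [hstar, ← hP] at h3
  have hZt : Zᴴ = Zᵀ := Matrix.conjTranspose_eq_transpose_of_trivial Z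
  rw [← hZt, h3]
  congr 1

lemma frobInner_le_nuclearNorm {m n : ℕ} (A Z : Matrix (Fin m) (Fin n) ℝ)
    (hA : ∀ u : Fin m → ℝ, ∑ j, (Aᵀ.mulVec u j) ^ 2 ≤ ∑ i, u i ^ 2) :
    frobInner A Z ≤ nuclearNorm Z := by
  obtain ⟨P, hP1, hP2, hPD⟩ := eigen_facts Z
  set μ := (Matrix.isHermitian_mul_conjTranspose_self Z).eigenvalues with hμ
  set p : Fin m → Fin m → ℝ := fun i k => P k i with hp
  have hpnorm : ∀ i, ∑ k, (p i k) ^ 2 = 1 := by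
    intro i
    have : (Pᵀ * P) i i = (1 : Matrix (Fin m) (Fin m) ℝ) i i := by rw [hP1]
    simpa [Matrix.mul_apply, Matrix.one_apply, hp, sq] using this
  have hμi : ∀ i, μ i = ∑ j, ((Zᵀ *ᵥ p i) j) ^ 2 := by
    intro i
    have h := congrFun (congrFun hPD i) i
    rw [mul_assoc] at h
    have hL : (Pᵀ * ((Z * Zᵀ) * P)) i i = p i ⬝ᵥ ((Z * Zᵀ) *ᵥ p i) := by
      simp [Matrix.mul_apply, Matrix.mulVec, dotProduct, hp, Finset.mul_sum]
    rw [sumsq_transpose]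
    rw [← hL, h]
    simp [Matrix.diagonal_apply_eq]
  have hμ0 : ∀ i, 0 ≤ μ i := by
    intro i; rw [hμi i]; exact Finset.sum_nonneg fun _ _ => sq_nonneg _
  have ht : frobInner A Z = ∑ i, ∑ j, (Aᵀ *ᵥ p i) j * (Zᵀ *ᵥ p i) j := by
    rw [frobInner_eq_trace]
    have h0 : Matrix.trace ((Pᵀ * (A * Zᵀ)) * P) = Matrix.trace (A * Zᵀ) := by
      rw [Matrix.trace_mul_comm, ← mul_assoc, hP2, one_mul]
    rw [← h0]
    have hassoc : (Pᵀ * (A * Zᵀ)) * P = (Pᵀ * A) * (Zᵀ * P) := by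
      simp only [Matrix.mul_assoc]
    rw [hassoc]
    unfold Matrix.trace
    apply Finset.sum_congr rfl
    intro i _
    simp only [Matrix.diag_apply, Matrix.mul_apply]
    apply Finset.sum_congr rfl
    intro j _
    congr 1
    simp [Matrix.mul_apply, Matrix.mulVec, dotProduct, hp, mul_comm]
  rw [ht]
  unfold nuclearNorm
  rw [← hμ]
  apply Finset.sum_le_sum
  intro i _
  calc ∑ j, (Aᵀ *ᵥ p i) j * (Zᵀ *ᵥ p i) j
      ≤ Real.sqrt (∑ j, ((Aᵀ *ᵥ p i) j) ^ 2) * Real.sqrt (∑ j, ((Zᵀ *ᵥ p i) j) ^ 2) :=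
        dot_le_sqrt _ _
    _ ≤ 1 * Real.sqrt (μ i) := by
        rw [← hμi i]
        apply mul_le_mul_of_nonneg_right _ (Real.sqrt_nonneg _)
        have h1 : ∑ j, ((Aᵀ *ᵥ p i) j) ^ 2 ≤ 1 := by
          rw [← hpnorm i]; exact hA (p i)
        calc Real.sqrt (∑ j, ((Aᵀ *ᵥ p i) j) ^ 2) ≤ Real.sqrt 1 := Real.sqrt_le_sqrt h1
          _ = 1 := Real.sqrt_one
    _ = Real.sqrt (μ i) := one_mul _

lemma dot_self_eq {k : ℕ} (u : Fin k → ℝ) : u ⬝ᵥ u = ∑ i, u i ^ 2 := by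
  simp [dotProduct, sq]

lemma diag_entry_eq {m n : ℕ} (X : Matrix (Fin m) (Fin n) ℝ) (P : Matrix (Fin m) (Fin m) ℝ)
    (μ : Fin m → ℝ) (hPD : Pᵀ * (X * Xᵀ) * P = Matrix.diagonal μ) (i : Fin m) :
    μ i = ∑ j, ((Xᵀ *ᵥ (fun k => P k i)) j) ^ 2 := by
  have h := congrFun (congrFun hPD i) i
  rw [Matrix.mul_assoc] at h
  have hL : (Pᵀ * ((X * Xᵀ) * P)) i i = (fun k => P k i) ⬝ᵥ ((X * Xᵀ) *ᵥ (fun k => P k i)) := by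
    simp [Matrix.mul_apply, Matrix.mulVec, dotProduct, Finset.mul_sum]
  rw [sumsq_transpose, ← hL, h]
  simp [Matrix.diagonal_apply_eq]

lemma col_sq_one {q r : ℕ} (U : Matrix (Fin q) (Fin r) ℝ) (hU : Uᵀ * U = 1) (k : Fin r) :
    ∑ i, (U i k) ^ 2 = 1 := by
  have h := congrFun (congrFun hU k) k
  simpa [Matrix.mul_apply, Matrix.one_apply, sq] using h

lemma nuclearNorm_le_sum {m n r : ℕ}
    (U : Matrix (Fin m) (Fin r) ℝ) (V : Matrix (Fin n) (Fin r) ℝ) (σ : Fin r → ℝ)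
    (hσ : ∀ i, 0 < σ i) (hU : Uᵀ * U = 1) (hV : Vᵀ * V = 1)
    (X : Matrix (Fin m) (Fin n) ℝ) (hX : X = U * Matrix.diagonal σ * Vᵀ) :
    nuclearNorm X ≤ ∑ k, σ k := by
  obtain ⟨P, hP1, hP2, hPD⟩ := eigen_facts X
  set μ := (Matrix.isHermitian_mul_conjTranspose_self X).eigenvalues with hμdef
  have hμ0 : ∀ i, 0 ≤ μ i := fun i => by
    rw [diag_entry_eq X P μ hPD i]
    exact Finset.sum_nonneg fun _ _ => sq_nonneg _
  set g : Fin m → ℝ := fun i => (Real.sqrt (μ i))⁻¹ with hg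
  set c : Fin m → ℝ := fun i => g i * (μ i * g i) with hc
  set D : Matrix (Fin m) (Fin m) ℝ := Matrix.diagonal g with hD
  set B : Matrix (Fin m) (Fin n) ℝ := P * D * Pᵀ * X with hB
  have hgμ : ∀ i, g i * μ i = Real.sqrt (μ i) := by
    intro i
    rcases eq_or_lt_of_le (hμ0 i) with h0 | h0
    · simp [hg, ← h0]
    · have hs : Real.sqrt (μ i) > 0 := Real.sqrt_pos.mpr h0
      rw [hg]
      field_simp
      rw [Real.sq_sqrt h0.le]
  have hc1 : ∀ i, c i ≤ 1 := by
    intro i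
    rcases eq_or_lt_of_le (hμ0 i) with h0 | h0
    · simp [hc, ← h0]
    · have hs : 0 < Real.sqrt (μ i) := Real.sqrt_pos.mpr h0
      have : μ i * g i = Real.sqrt (μ i) := by rw [mul_comm]; exact hgμ i
      rw [hc]
      simp only
      rw [this, hg]
      simp only
      rw [inv_mul_cancel₀ (ne_of_gt hs)]
  -- key1 : frobInner B X = ∑ sqrt μ
  have key1 : frobInner B X = ∑ i, Real.sqrt (μ i) := by
    rw [frobInner_eq_trace]
    have e1 : B * Xᵀ = P * (D * (Pᵀ * (X * Xᵀ))) := by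
      rw [hB]; simp only [Matrix.mul_assoc]
    rw [e1, Matrix.trace_mul_comm]
    have e2 : (D * (Pᵀ * (X * Xᵀ))) * P = D * Matrix.diagonal μ := by
      rw [Matrix.mul_assoc, Matrix.mul_assoc, ← Matrix.mul_assoc Pᵀ, hPD]
    rw [e2, hD, Matrix.diagonal_mul_diagonal, Matrix.trace_diagonal]
    exact Finset.sum_congr rfl fun i _ => hgμ i
  -- diagonal shuffling helper
  have dd : ∀ (a b : Fin m → ℝ) (Q : Matrix (Fin m) (Fin m) ℝ),
      Matrix.diagonal a * (Matrix.diagonal b * Q) = Matrix.diagonal (fun i => a i * b i) * Q :=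
    fun a b Q => by rw [← Matrix.mul_assoc, Matrix.diagonal_mul_diagonal]
  have hBBt : B * Bᵀ = P * Matrix.diagonal c * Pᵀ := by
    have hMt : Bᵀ = Xᵀ * (P * (D * Pᵀ)) := by
      rw [hB]
      simp only [Matrix.transpose_mul, Matrix.transpose_transpose, hD,
        Matrix.diagonal_transpose, Matrix.mul_assoc]
    rw [hB, hMt]
    have e3 : P * D * Pᵀ * X * (Xᵀ * (P * (D * Pᵀ)))
        = P * D * ((Pᵀ * (X * Xᵀ) * P) * (D * Pᵀ)) := by
      simp only [Matrix.mul_assoc]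
    rw [e3, hPD, hD]
    simp only [Matrix.mul_assoc, dd]
    rfl
  -- spectral bound for Bᵀ
  have hBt : ∀ u : Fin m → ℝ, ∑ j, ((Bᵀ *ᵥ u) j) ^ 2 ≤ ∑ i, u i ^ 2 := by
    intro u
    rw [sumsq_transpose, hBBt]
    have e : (P * Matrix.diagonal c * Pᵀ) *ᵥ u = P *ᵥ (Matrix.diagonal c *ᵥ (Pᵀ *ᵥ u)) := by
      rw [← Matrix.mulVec_mulVec, ← Matrix.mulVec_mulVec]
    rw [e, dot_mulVec']
    set w : Fin m → ℝ := Pᵀ *ᵥ u with hw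
    have hdot : w ⬝ᵥ (Matrix.diagonal c *ᵥ w) = ∑ i, c i * w i ^ 2 := by
      unfold dotProduct
      apply Finset.sum_congr rfl
      intro i _
      rw [Matrix.mulVec_diagonal]
      ring
    rw [hdot]
    have hw2 : ∑ i, w i ^ 2 = ∑ i, u i ^ 2 := by
      rw [hw, sumsq_transpose, hP2]
      rw [Matrix.one_mulVec, dot_self_eq]
    calc ∑ i, c i * w i ^ 2 ≤ ∑ i, 1 * w i ^ 2 := by
          apply Finset.sum_le_sum
          intro i _
          exact mul_le_mul_of_nonneg_right (hc1 i) (sq_nonneg _)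
      _ = ∑ i, w i ^ 2 := by simp
      _ = ∑ i, u i ^ 2 := hw2
  have hBv : ∀ v : Fin n → ℝ, ∑ i, ((B *ᵥ v) i) ^ 2 ≤ ∑ j, v j ^ 2 := by
    have h := transpose_bound Bᵀ hBt
    intro v
    have := h v
    rwa [Matrix.transpose_transpose] at this
  -- nuclearNorm X = frobInner B X
  have hnuc : nuclearNorm X = frobInner B X := by
    rw [key1]; rfl
  rw [hnuc]
  -- frobInner B X ≤ ∑ σ
  have e4 : frobInner B X = ∑ k, (Uᵀ * (B * V)) k k * σ k := by
    rw [frobInner_eq_trace, hX]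
    have hXt : (U * Matrix.diagonal σ * Vᵀ)ᵀ = V * (Matrix.diagonal σ * Uᵀ) := by
      simp only [Matrix.transpose_mul, Matrix.transpose_transpose,
        Matrix.diagonal_transpose, Matrix.mul_assoc]
    rw [hXt]
    have e5 : B * (V * (Matrix.diagonal σ * Uᵀ)) = (B * V * Matrix.diagonal σ) * Uᵀ := by
      simp only [Matrix.mul_assoc]
    rw [e5, Matrix.trace_mul_comm]
    have e6 : Uᵀ * (B * V * Matrix.diagonal σ) = (Uᵀ * (B * V)) * Matrix.diagonal σ := by
      simp only [Matrix.mul_assoc]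
    rw [e6]
    simp [Matrix.trace, Matrix.diag, Matrix.mul_diagonal]
  rw [e4]
  apply Finset.sum_le_sum
  intro k _
  have hdiag : (Uᵀ * (B * V)) k k = ∑ i, U i k * ((B *ᵥ (fun j => V j k)) i) := by
    simp [Matrix.mul_apply, Matrix.mulVec, dotProduct]
  have hbound : (Uᵀ * (B * V)) k k ≤ 1 := by
    rw [hdiag]
    calc ∑ i, U i k * ((B *ᵥ (fun j => V j k)) i)
        ≤ Real.sqrt (∑ i, (U i k) ^ 2) * Real.sqrt (∑ i, ((B *ᵥ (fun j => V j k)) i) ^ 2) :=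
          dot_le_sqrt _ _
      _ ≤ 1 := by
          rw [col_sq_one U hU k, Real.sqrt_one, one_mul]
          have h1 : ∑ i, ((B *ᵥ (fun j => V j k)) i) ^ 2 ≤ 1 := by
            have := hBv (fun j => V j k)
            rwa [col_sq_one V hV k] at this
          calc Real.sqrt (∑ i, ((B *ᵥ (fun j => V j k)) i) ^ 2) ≤ Real.sqrt 1 :=
                Real.sqrt_le_sqrt h1
            _ = 1 := Real.sqrt_one
  calc (Uᵀ * (B * V)) k k * σ k ≤ 1 * σ k :=
        mul_le_mul_of_nonneg_right hbound (le_of_lt (hσ k))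
    _ = σ k := one_mul _

lemma frobInner_sub {m n : ℕ} (A Y Xm : Matrix (Fin m) (Fin n) ℝ) :
    frobInner A (Y - Xm) = frobInner A Y - frobInner A Xm := by
  simp [frobInner, mul_sub, Finset.sum_sub_distrib]

/-- Subgradient of the nuclear norm: for X = U Diag(σ) Vᵀ (compact SVD, σ > 0) and any W
with Uᵀ W = 0, W V = 0 and spectral norm at most 1, the matrix U Vᵀ + W is a
subgradient of ‖·‖_* at X. -/
theorem nuclearNorm_subgradient {m n r : ℕ}
    (U : Matrix (Fin m) (Fin r) ℝ) (V : Matrix (Fin n) (Fin r) ℝ) (σ : Fin r → ℝ)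
    (hσ : ∀ i, 0 < σ i) (hU : Uᵀ * U = 1) (hV : Vᵀ * V = 1)
    (X : Matrix (Fin m) (Fin n) ℝ) (hX : X = U * Matrix.diagonal σ * Vᵀ)
    (W : Matrix (Fin m) (Fin n) ℝ) (hW1 : Uᵀ * W = 0) (hW2 : W * V = 0)
    (hWnorm : ∀ v : Fin n → ℝ, ∑ i, (W.mulVec v i) ^ 2 ≤ ∑ j, v j ^ 2) :
    ∀ Z : Matrix (Fin m) (Fin n) ℝ,
      nuclearNorm Z ≥ nuclearNorm X + frobInner (U * Vᵀ + W) (Z - X) := by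
  intro Z
  set A : Matrix (Fin m) (Fin n) ℝ := U * Vᵀ + W with hA
  -- ⟨A, X⟩ = ∑ σ
  have hAX : frobInner A X = ∑ k, σ k := by
    rw [frobInner_eq_trace, hX]
    have hXt : (U * Matrix.diagonal σ * Vᵀ)ᵀ = V * (Matrix.diagonal σ * Uᵀ) := by
      simp only [Matrix.transpose_mul, Matrix.transpose_transpose,
        Matrix.diagonal_transpose, Matrix.mul_assoc]
    rw [hXt, hA, Matrix.add_mul]
    have h1 : U * Vᵀ * (V * (Matrix.diagonal σ * Uᵀ)) = U * (Matrix.diagonal σ * Uᵀ) := by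
      rw [Matrix.mul_assoc, ← Matrix.mul_assoc Vᵀ, hV, Matrix.one_mul]
    have h2 : W * (V * (Matrix.diagonal σ * Uᵀ)) = 0 := by
      rw [← Matrix.mul_assoc, hW2, Matrix.zero_mul]
    rw [h1, h2, add_zero, Matrix.trace_mul_comm]
    rw [Matrix.mul_assoc, hU, Matrix.mul_one, Matrix.trace_diagonal]
  -- spectral bound on Aᵀ
  have hAbound : ∀ u : Fin m → ℝ, ∑ j, (Aᵀ.mulVec u j) ^ 2 ≤ ∑ i, u i ^ 2 := by
    intro u
    rw [sumsq_transpose]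
    have e1 : U * Vᵀ * (V * Uᵀ) = U * Uᵀ := by
      rw [Matrix.mul_assoc, ← Matrix.mul_assoc Vᵀ, hV, Matrix.one_mul]
    have e2 : U * Vᵀ * Wᵀ = 0 := by
      rw [Matrix.mul_assoc, ← Matrix.transpose_mul, hW2, Matrix.transpose_zero,
        Matrix.mul_zero]
    have e3 : W * (V * Uᵀ) = 0 := by
      rw [← Matrix.mul_assoc, hW2, Matrix.zero_mul]
    have hAAt : A * Aᵀ = U * Uᵀ + W * Wᵀ := by
      rw [hA, Matrix.transpose_add, Matrix.transpose_mul, Matrix.transpose_transpose,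
        Matrix.add_mul, Matrix.mul_add, Matrix.mul_add, e1, e2, e3, add_zero, zero_add]
    rw [hAAt, Matrix.add_mulVec, dotProduct_add]
    have t1 : u ⬝ᵥ ((U * Uᵀ) *ᵥ u) = ∑ j, ((Uᵀ *ᵥ u) j) ^ 2 := (sumsq_transpose U u).symm
    have t2 : u ⬝ᵥ ((W * Wᵀ) *ᵥ u) = ∑ j, ((Wᵀ *ᵥ u) j) ^ 2 := (sumsq_transpose W u).symm
    rw [t1, t2]
    -- Wᵀ u = Wᵀ ((1 - U Uᵀ) u)
    set M : Matrix (Fin m) (Fin m) ℝ := 1 - U * Uᵀ with hM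
    have hWtu : Wᵀ *ᵥ u = Wᵀ *ᵥ (M *ᵥ u) := by
      rw [hM, Matrix.sub_mulVec, Matrix.one_mulVec, Matrix.mulVec_sub, Matrix.mulVec_mulVec]
      have : Wᵀ * U = 0 := by
        have := congrArg Matrix.transpose hW1
        rwa [Matrix.transpose_mul, Matrix.transpose_transpose, Matrix.transpose_zero] at this
      rw [← Matrix.mul_assoc, this, Matrix.zero_mul, Matrix.zero_mulVec, sub_zero]
    have hWb : ∑ j, ((Wᵀ *ᵥ u) j) ^ 2 ≤ ∑ i, ((M *ᵥ u) i) ^ 2 := by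
      rw [hWtu]
      exact transpose_bound W hWnorm (M *ᵥ u)
    have hMnorm : ∑ i, ((M *ᵥ u) i) ^ 2 = ∑ i, u i ^ 2 - ∑ j, ((Uᵀ *ᵥ u) j) ^ 2 := by
      rw [sumsq_mulVec]
      have hMt : Mᵀ = M := by
        rw [hM, Matrix.transpose_sub, Matrix.transpose_one, Matrix.transpose_mul,
          Matrix.transpose_transpose]
      have hproj : (U * Uᵀ) * (U * Uᵀ) = U * Uᵀ := by
        rw [Matrix.mul_assoc, ← Matrix.mul_assoc Uᵀ, hU, Matrix.one_mul]
      have hMM : Mᵀ * M = M := by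
        rw [hMt, hM, Matrix.mul_sub, Matrix.sub_mul, Matrix.sub_mul, hproj, Matrix.mul_one,
          Matrix.one_mul]
        simp only [Matrix.mul_one]
        abel
      rw [hMM, hM, Matrix.sub_mulVec, Matrix.one_mulVec, dotProduct_sub, dot_self_eq]
      congr 1
    linarith [hWb, hMnorm]
  have hZle : frobInner A Z ≤ nuclearNorm Z := frobInner_le_nuclearNorm A Z hAbound
  have hXle : nuclearNorm X ≤ ∑ k, σ k := nuclearNorm_le_sum U V σ hσ hU hV X hX
  have hsub : frobInner A (Z - X) = frobInner A Z - ∑ k, σ k := by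
    rw [frobInner_sub, hAX]
  rw [ge_iff_le, hsub]
  linarith
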